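/- Under the stated assumptions, if ℓ, h ∈ (0, min{1, m_b} ε), then there exists a constant C > 0, depending only on K, b, ε, l₀, r₀ and m_b (but not on ℓ, h, b̂ or the probability space), such that ∫_{I₀} E(|b̂_{ℓ,h}(x) − b(x)|) dx ≤ C ( ℓ + h + R(b̂)^{1/2} + R(b̂)/h ). -/

import Mathlib

open MeasureTheory

/-- The rescaled kernel `K_η(x) = η⁻¹ K(x/η)`. -/
noncomputable def Kh (K : ℝ → ℝ) (η x : ℝ) : ℝ := η⁻¹ * K (x / η)

/-- The estimator `𝔟̂_h⁻¹(w) = l₀ - 2ε + ∫_{I_{2ε}} ∫_{-∞}^{-w} K_h(-g(z) - y) dy dz`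
of the inverse of `b`, computed from an estimation `g` of `b`. -/
noncomputable def binvEst (K : ℝ → ℝ) (l₀ r₀ ε h : ℝ) (g : ℝ → ℝ) (w : ℝ) : ℝ :=
  (l₀ - 2 * ε) +
    ∫ z in Set.Icc (l₀ - 2 * ε) (r₀ + 2 * ε), ∫ y in Set.Iic (-w), Kh K h (-(g z) - y)

/-- The strictly decreasing estimator
`lo + ∫_{lo}^{hi} ∫_{-∞}^{-x} K_ℓ(-𝔟̂_h⁻¹(z) - y) dy dz`, where in the paper
`lo = b(r₀ + ε)` and `hi = b(l₀ - ε)` (or their estimated versions). -/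
noncomputable def monoEst (K : ℝ → ℝ) (l₀ r₀ ε ℓ h lo hi : ℝ) (g : ℝ → ℝ) (x : ℝ) : ℝ :=
  lo + ∫ z in lo..hi, ∫ y in Set.Iic (-x), Kh K ℓ (-(binvEst K l₀ r₀ ε h g z) - y)


noncomputable def Gf (K : ℝ → ℝ) (η s : ℝ) : ℝ := ∫ t in Set.Ici s, Kh K η t

variable {K : ℝ → ℝ} {η : ℝ}

lemma Kh_zero {K : ℝ → ℝ} (hKsupp : ∀ y, 1 < |y| → K y = 0) {η : ℝ} (hη : 0 < η)
    {x : ℝ} (hx : η < |x|) : Kh K η x = 0 := by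
  have : 1 < |x / η| := by
    rw [abs_div, abs_of_pos hη, lt_div_iff₀ hη, one_mul]; exact hx
  simp [Kh, hKsupp _ this]

lemma Kh_nonneg {K : ℝ → ℝ} (hK0 : ∀ y, 0 ≤ K y) {η : ℝ} (hη : 0 < η) (x : ℝ) :
    0 ≤ Kh K η x := mul_nonneg (inv_nonneg.2 hη.le) (hK0 _)

lemma Kh_integrable {K : ℝ → ℝ} (hKc : Continuous K) (hKsupp : ∀ y, 1 < |y| → K y = 0)
    {η : ℝ} (hη : 0 < η) : Integrable (Kh K η) := by
  have hc : Continuous (Kh K η) := by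
    unfold Kh; exact continuous_const.mul (hKc.comp (continuous_id.div_const η))
  refine hc.integrable_of_hasCompactSupport (HasCompactSupport.intro (isCompact_Icc (a := -η) (b := η)) ?_)
  intro x hx
  refine Kh_zero hKsupp hη ?_
  rcases abs_cases x with ⟨he, _⟩ | ⟨he, _⟩ <;> rw [he] <;> by_contra hcon <;> push_neg at hcon <;>
    exact hx ⟨by linarith, by linarith⟩

lemma Kh_int_one {K : ℝ → ℝ} (hKint : ∫ y, K y = 1) {η : ℝ} (hη : 0 < η) :
    ∫ x, Kh K η x = 1 := by
  unfold Kh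
  rw [MeasureTheory.integral_const_mul, MeasureTheory.Measure.integral_comp_div K η,
    abs_of_pos hη, hKint, smul_eq_mul, mul_one]
  exact inv_mul_cancel₀ hη.ne'

lemma Gf_nonneg (hK0 : ∀ y, 0 ≤ K y) (hη : 0 < η) (s : ℝ) : 0 ≤ Gf K η s :=
  setIntegral_nonneg measurableSet_Ici (fun x _ => Kh_nonneg hK0 hη x)

lemma Gf_le_one (hK0 : ∀ y, 0 ≤ K y) (hKc : Continuous K)
    (hKsupp : ∀ y, 1 < |y| → K y = 0) (hKint : ∫ y, K y = 1) (hη : 0 < η) (s : ℝ) :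
    Gf K η s ≤ 1 := by
  rw [← Kh_int_one hKint hη]
  exact setIntegral_le_integral (Kh_integrable hKc hKsupp hη)
    (Filter.Eventually.of_forall (Kh_nonneg hK0 hη))

lemma Gf_anti (hK0 : ∀ y, 0 ≤ K y) (hKc : Continuous K)
    (hKsupp : ∀ y, 1 < |y| → K y = 0) (hη : 0 < η) : Antitone (Gf K η) := by
  intro s t hst
  exact setIntegral_mono_set ((Kh_integrable hKc hKsupp hη).integrableOn)
    (Filter.Eventually.of_forall (Kh_nonneg hK0 hη))
    (HasSubset.Subset.eventuallyLE (Set.Ici_subset_Ici.2 hst))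

lemma Gf_meas (hK0 : ∀ y, 0 ≤ K y) (hKc : Continuous K)
    (hKsupp : ∀ y, 1 < |y| → K y = 0) (hη : 0 < η) : Measurable (Gf K η) :=
  (Gf_anti hK0 hKc hKsupp hη).measurable

lemma Gf_eq_one (hKc : Continuous K) (hKsupp : ∀ y, 1 < |y| → K y = 0)
    (hKint : ∫ y, K y = 1) (hη : 0 < η) {s : ℝ} (hs : s ≤ -η) : Gf K η s = 1 := by
  have h1 : ∫ x in Set.Iio s, Kh K η x = 0 := by
    apply setIntegral_eq_zero_of_forall_eq_zero
    intro x hx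
    exact Kh_zero hKsupp hη (by rw [abs_of_neg (by simp at hx; linarith)]; simp at hx; linarith)
  have h2 := (Kh_integrable hKc hKsupp hη).integrableOn (s := Set.Iio s)
  have h3 := (Kh_integrable hKc hKsupp hη).integrableOn (s := Set.Ici s)
  have := intervalIntegral.integral_Iio_add_Ici (μ := volume) h2 h3
  rw [Kh_int_one hKint hη, h1, zero_add] at this
  unfold Gf; linarith [this]

lemma Gf_eq_zero (hKsupp : ∀ y, 1 < |y| → K y = 0) (hη : 0 < η) {s : ℝ} (hs : η ≤ s) :
    Gf K η s = 0 := by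
  have hae : ∀ᵐ x : ℝ, x ≠ η := by
    refine (MeasureTheory.ae_iff).2 ?_
    simpa using measure_singleton (η : ℝ)
  have : Gf K η s = ∫ t in Set.Ici s, (0 : ℝ) := by
    refine setIntegral_congr_ae measurableSet_Ici ?_
    filter_upwards [hae] with x hx hxs
    refine Kh_zero hKsupp hη ?_
    have hx1 : η ≤ x := le_trans hs hxs
    rw [abs_of_pos (lt_of_lt_of_le hη hx1)]
    exact lt_of_le_of_ne hx1 (Ne.symm hx)
  simp [this]

/-- rewriting the inner integral of the estimators -/
lemma Kh_iic (K : ℝ → ℝ) (η : ℝ) (c a : ℝ) :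
    ∫ y in Set.Iic a, Kh K η (c - y) = Gf K η (c - a) := by
  have hemb := (MeasurableEquiv.subLeft c).measurableEmbedding (α := ℝ)
  have h := hemb.setIntegral_map (μ := volume) (Kh K η) (Set.Ici (c - a))
  have hco : ⇑(MeasurableEquiv.subLeft c) = fun t : ℝ => c - t := rfl
  rw [hco] at h
  rw [Measure.map_sub_left_eq_self volume c] at h
  have hpre : (fun t : ℝ => c - t) ⁻¹' Set.Ici (c - a) = Set.Iic a := by
    ext t; simp only [Set.mem_preimage, Set.mem_Ici, Set.mem_Iic]; constructor <;> intro <;> linarith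
  rw [hpre] at h
  exact h.symm

lemma ind_mem_01 (S : Set ℝ) (x : ℝ) :
    S.indicator (fun _ => (1:ℝ)) x = 0 ∨ S.indicator (fun _ => (1:ℝ)) x = 1 := by
  by_cases hx : x ∈ S
  · right; simp [hx]
  · left; simp [hx]

lemma Gf_abs_sub_ind_le_one (hK0 : ∀ y, 0 ≤ K y) (hKc : Continuous K)
    (hKsupp : ∀ y, 1 < |y| → K y = 0) (hKint : ∫ y, K y = 1) (hη : 0 < η)
    (S : Set ℝ) (s x : ℝ) :
    |Gf K η s - S.indicator (fun _ => (1:ℝ)) x| ≤ 1 := by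
  have h1 := Gf_le_one hK0 hKc hKsupp hKint hη s
  have h2 := Gf_nonneg hK0 hη s
  rcases ind_mem_01 S x with h | h <;> rw [h, abs_le] <;> constructor <;> linarith

lemma Gf_ind (hK0 : ∀ y, 0 ≤ K y) (hKc : Continuous K)
    (hKsupp : ∀ y, 1 < |y| → K y = 0) (hKint : ∫ y, K y = 1) (hη : 0 < η) (B x : ℝ) :
    |Gf K η (x - B) - (Set.Iio B).indicator (fun _ => (1:ℝ)) x| ≤
      (Set.Icc (B - η) (B + η)).indicator (fun _ => (1:ℝ)) x := by
  by_cases hmem : x ∈ Set.Icc (B - η) (B + η)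
  · rw [Set.indicator_of_mem hmem]
    exact Gf_abs_sub_ind_le_one hK0 hKc hKsupp hKint hη _ _ _
  · rw [Set.indicator_of_notMem hmem]
    rw [Set.mem_Icc] at hmem
    push_neg at hmem
    rcases lt_or_ge x (B - η) with hx | hx
    · rw [Gf_eq_one hKc hKsupp hKint hη (by linarith),
        Set.indicator_of_mem (by rw [Set.mem_Iio]; linarith)]
      simp
    · have hx2 : B + η < x := hmem hx
      rw [Gf_eq_zero hKsupp hη (by linarith),
        Set.indicator_of_notMem (by rw [Set.mem_Iio]; push_neg; linarith)]
      simp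

lemma intInt_of_bdd {f : ℝ → ℝ} (hf : Measurable f) (C : ℝ) (hC : ∀ x, |f x| ≤ C) (a b : ℝ) :
    IntervalIntegrable f volume a b := by
  rw [intervalIntegrable_iff]
  exact (integrableOn_const measure_Ioc_lt_top.ne).mono'
    hf.aestronglyMeasurable (Filter.Eventually.of_forall hC)

lemma Gf_tv (hK0 : ∀ y, 0 ≤ K y) (hKc : Continuous K)
    (hKsupp : ∀ y, 1 < |y| → K y = 0) (hKint : ∫ y, K y = 1) (hη : 0 < η)
    {p q : ℝ} (hpq : p ≤ q) (A B : ℝ) :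
    ∫ x in p..q, |Gf K η (x - A) - Gf K η (x - B)| ≤ |A - B| := by
  have hGb : ∀ s : ℝ, |Gf K η s| ≤ 1 := fun s => abs_le.2
    ⟨by linarith [Gf_nonneg hK0 hη s], Gf_le_one hK0 hKc hKsupp hKint hη s⟩
  have hGm := Gf_meas hK0 hKc hKsupp hη
  have key : ∀ A B : ℝ, A ≤ B →
      ∫ x in p..q, |Gf K η (x - A) - Gf K η (x - B)| ≤ B - A := by
    intro A B hAB
    have hptw : ∀ x : ℝ, |Gf K η (x - A) - Gf K η (x - B)| =
        Gf K η (x - B) - Gf K η (x - A) := by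
      intro x
      rw [abs_sub_comm, abs_of_nonneg (by
        have := Gf_anti hK0 hKc hKsupp hη (a := x - B) (b := x - A) (by linarith); linarith)]
    have hiiA : IntervalIntegrable (fun x : ℝ => Gf K η (x - A)) volume p q :=
      intInt_of_bdd (hGm.comp (measurable_id.sub_const A)) 1 (fun x => hGb _) p q
    have hiiB : IntervalIntegrable (fun x : ℝ => Gf K η (x - B)) volume p q :=
      intInt_of_bdd (hGm.comp (measurable_id.sub_const B)) 1 (fun x => hGb _) p q
    have hiiG : ∀ a b : ℝ, IntervalIntegrable (Gf K η) volume a b :=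
      fun a b => intInt_of_bdd hGm 1 hGb a b
    have hsplit :
        (∫ x in p..q, Gf K η (x - B)) - ∫ x in p..q, Gf K η (x - A) =
        (∫ x in (p-B)..(p-A), Gf K η x) - ∫ x in (q-B)..(q-A), Gf K η x := by
      rw [intervalIntegral.integral_comp_sub_right (fun x => Gf K η x) B,
        intervalIntegral.integral_comp_sub_right (fun x => Gf K η x) A,
        ← intervalIntegral.integral_add_adjacent_intervals (a := p - B) (b := p - A) (c := q - B) (hiiG _ _) (hiiG _ _),
        ← intervalIntegral.integral_add_adjacent_intervals (a := p - A) (b := q - B) (c := q - A) (hiiG _ _) (hiiG _ _)]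
      ring
    calc ∫ x in p..q, |Gf K η (x - A) - Gf K η (x - B)|
        = (∫ x in p..q, Gf K η (x - B)) - ∫ x in p..q, Gf K η (x - A) := by
          rw [← intervalIntegral.integral_sub hiiB hiiA]
          exact intervalIntegral.integral_congr (fun x _ => hptw x)
      _ = (∫ x in (p-B)..(p-A), Gf K η x) - ∫ x in (q-B)..(q-A), Gf K η x := hsplit
      _ ≤ (B - A) - 0 := by
          have h1 : |∫ x in (p-B)..(p-A), Gf K η x| ≤ 1 * |(p - A) - (p - B)| := by
            have := intervalIntegral.norm_integral_le_of_norm_le_const (C := 1)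
              (f := Gf K η) (a := p - B) (b := p - A)
              (fun x _ => by rw [Real.norm_eq_abs]; exact hGb x)
            rwa [Real.norm_eq_abs] at this
          have h2 : 0 ≤ ∫ x in (q-B)..(q-A), Gf K η x :=
            intervalIntegral.integral_nonneg (by linarith) (fun u _ => Gf_nonneg hK0 hη u)
          have : |(p - A) - (p - B)| = B - A := by rw [abs_of_nonneg (by linarith)]; ring
          rw [this, one_mul] at h1
          have := abs_le.1 h1
          linarith [this.2]
      _ = B - A := by ring
  rcases le_total A B with hAB | hBA
  · rw [abs_of_nonpos (by linarith), neg_sub]; exact key A B hAB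
  · rw [abs_of_nonneg (by linarith)]
    calc ∫ x in p..q, |Gf K η (x - A) - Gf K η (x - B)|
        = ∫ x in p..q, |Gf K η (x - B) - Gf K η (x - A)| :=
          intervalIntegral.integral_congr (fun x _ => abs_sub_comm _ _)
      _ ≤ A - B := key B A hBA

lemma Gf_indInt (hK0 : ∀ y, 0 ≤ K y) (hKc : Continuous K)
    (hKsupp : ∀ y, 1 < |y| → K y = 0) (hKint : ∫ y, K y = 1) (hη : 0 < η)
    {p q : ℝ} (hpq : p ≤ q) (B : ℝ) :
    ∫ x in p..q, |Gf K η (x - B) - (Set.Iio B).indicator (fun _ => (1:ℝ)) x| ≤ 2 * η := by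
  have hGm := Gf_meas hK0 hKc hKsupp hη
  have hmeas : Measurable (fun x : ℝ =>
      |Gf K η (x - B) - (Set.Iio B).indicator (fun _ => (1:ℝ)) x|) := by
    apply Measurable.abs
    exact (hGm.comp (measurable_id.sub_const B)).sub
      ((measurable_const (a := (1:ℝ))).indicator measurableSet_Iio)
  have hbd : ∀ x : ℝ, |Gf K η (x - B) - (Set.Iio B).indicator (fun _ => (1:ℝ)) x| ≤ 1 :=
    fun x => Gf_abs_sub_ind_le_one hK0 hKc hKsupp hKint hη _ _ _
  calc ∫ x in p..q, |Gf K η (x - B) - (Set.Iio B).indicator (fun _ => (1:ℝ)) x|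
      ≤ ∫ x in p..q, (Set.Icc (B - η) (B + η)).indicator (fun _ => (1:ℝ)) x := by
        apply intervalIntegral.integral_mono_on hpq
          (intInt_of_bdd hmeas 1 (fun x => by rw [abs_abs]; exact hbd x) p q)
          (intInt_of_bdd ((measurable_const (a := (1:ℝ))).indicator measurableSet_Icc) 1
            (fun x => by rcases ind_mem_01 (Set.Icc (B-η) (B+η)) x with h | h <;> rw [h] <;> simp) p q)
        exact fun x _ => Gf_ind hK0 hKc hKsupp hKint hη B x
    _ ≤ 2 * η := by
        rw [intervalIntegral.integral_of_le hpq, setIntegral_indicator measurableSet_Icc]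
        rw [setIntegral_const]
        simp only [smul_eq_mul, mul_one]
        have hle : volume (Set.Ioc p q ∩ Set.Icc (B - η) (B + η)) ≤ volume (Set.Icc (B - η) (B + η)) :=
          measure_mono Set.inter_subset_right
        have hItop : volume (Set.Icc (B - η) (B + η)) ≠ ⊤ := measure_Icc_lt_top.ne
        calc (volume (Set.Ioc p q ∩ Set.Icc (B - η) (B + η))).toReal
            ≤ (volume (Set.Icc (B - η) (B + η))).toReal := ENNReal.toReal_mono hItop hle
          _ = 2 * η := by rw [Real.volume_Icc, ENNReal.toReal_ofReal (by linarith)]; ring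

lemma intOn_bdd {f : ℝ → ℝ} (hf : Measurable f) {C : ℝ} (hC : ∀ x, |f x| ≤ C)
    {s : Set ℝ} (hfin : volume s < ⊤) : IntegrableOn f s :=
  Integrable.mono' (integrableOn_const hfin.ne) hf.aestronglyMeasurable
    (Filter.Eventually.of_forall hC)

lemma finRestrict {s : Set ℝ} (h : volume s < ⊤) : IsFiniteMeasure (volume.restrict s) :=
  ⟨by rwa [Measure.restrict_apply_univ]⟩

lemma my_swap {s t : Set ℝ} (hs : volume s < ⊤) (ht : volume t < ⊤) {f : ℝ → ℝ → ℝ}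
    (hf : Measurable (Function.uncurry f)) (hbd : ∀ x y, |f x y| ≤ 1) :
    ∫ x in s, ∫ y in t, f x y = ∫ y in t, ∫ x in s, f x y := by
  haveI := finRestrict hs; haveI := finRestrict ht
  refine integral_integral_swap ?_
  exact (integrable_const 1).mono' hf.aestronglyMeasurable
    (Filter.Eventually.of_forall (fun p => by rw [Real.norm_eq_abs]; exact hbd p.1 p.2))

set_option maxHeartbeats 1000000 in
lemma perOmega (l₀ r₀ ε : ℝ) (K b bt : ℝ → ℝ)
    (hlr : l₀ < r₀) (hε : 0 < ε)
    (hK0 : ∀ y, 0 ≤ K y) (hKc : Continuous K)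
    (hKsupp : ∀ y, 1 < |y| → K y = 0) (hKint : ∫ y, K y = 1)
    (hbtc : Continuous bt)
    (hbt : ∀ x ∈ Set.Icc (l₀ - 2*ε) (r₀ + 2*ε), bt x = b x)
    (hanti : StrictAntiOn b (Set.Icc (l₀ - 2*ε) (r₀ + 2*ε)))
    (hbC : ContinuousOn b (Set.Icc (l₀ - 2*ε) (r₀ + 2*ε)))
    (g : ℝ → ℝ) (hg : Measurable g)
    (hd2 : IntegrableOn (fun u => |g u - b u|^2) (Set.Icc (l₀ - 2*ε) (r₀ + 2*ε)))
    (ℓ h : ℝ) (hℓ : 0 < ℓ) (hh : 0 < h) :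
    ∫ x in Set.Icc l₀ r₀, |monoEst K l₀ r₀ ε ℓ h (b (r₀+ε)) (b (l₀-ε)) g x - b x| ≤
      2*ℓ*(b (l₀-ε) - b (r₀+ε)) + (5/2)*h*(r₀ - l₀ + 4*ε) +
        (1/(2*h)) * ∫ u in Set.Icc (l₀ - 2*ε) (r₀ + 2*ε), |g u - b u|^2 := by
  set L2 := l₀ - 2*ε with hL2
  set R2 := r₀ + 2*ε with hR2
  set I2 : Set ℝ := Set.Icc L2 R2 with hI2
  set lo := b (r₀ + ε) with hlo
  set hi := b (l₀ - ε) with hhi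
  have hmemL : l₀ - ε ∈ I2 := by rw [hI2, Set.mem_Icc]; constructor <;> linarith
  have hmemR : r₀ + ε ∈ I2 := by rw [hI2, Set.mem_Icc]; constructor <;> linarith
  have hmemI₀ : ∀ x ∈ Set.Icc l₀ r₀, x ∈ I2 := by
    intro x hx; rw [Set.mem_Icc] at hx ⊢; constructor <;> linarith [hx.1, hx.2]
  have hlohi : lo < hi := hanti hmemL hmemR (by linarith)
  have hvolI2 : volume I2 < ⊤ := measure_Icc_lt_top
  have hvolIoc : volume (Set.Ioc lo hi) < ⊤ := measure_Ioc_lt_top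
  have hvolI₀ : volume (Set.Icc l₀ r₀) < ⊤ := measure_Icc_lt_top
  -- surjectivity from IVT
  have hsurj : ∀ z ∈ Set.Icc lo hi, ∃ u, u ∈ Set.Icc (l₀ - ε) (r₀ + ε) ∧ b u = z := by
    intro z hz
    have hsub : Set.Icc (l₀ - ε) (r₀ + ε) ⊆ I2 := by
      intro u hu; rw [Set.mem_Icc] at hu ⊢; constructor <;> linarith [hu.1, hu.2]
    have := intermediate_value_Icc' (by linarith : l₀ - ε ≤ r₀ + ε) (hbC.mono hsub)
    obtain ⟨u, hu, hbu⟩ := this hz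
    exact ⟨u, hu, hbu⟩
  have hGbd : ∀ (η : ℝ), 0 < η → ∀ (s : ℝ), |Gf K η s| ≤ 1 := fun η hη s =>
    abs_le.2 ⟨by linarith [Gf_nonneg hK0 hη s], Gf_le_one hK0 hKc hKsupp hKint hη s⟩
  -- the inverse-estimator as G-integral
  set tb : ℝ → ℝ := binvEst K l₀ r₀ ε h g with htb
  have htbeq : ∀ z : ℝ, tb z = L2 + ∫ u in I2, Gf K h (z - g u) := by
    intro z
    rw [htb]; unfold binvEst
    congr 1
    refine setIntegral_congr_fun measurableSet_Icc (fun u _ => ?_)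
    rw [Kh_iic K h (-(g u)) (-z), show -(g u) - (-z) = z - g u by ring]
  have htb_anti : Antitone tb := by
    intro z1 z2 h12
    rw [htbeq z1, htbeq z2]
    have hmono := Gf_anti hK0 hKc hKsupp hh
    refine add_le_add_right (setIntegral_mono ?_ ?_ ?_) L2
    · refine intOn_bdd ?_ (C := 1) (fun u => hGbd h hh _) hvolI2
      exact (Gf_meas hK0 hKc hKsupp hh).comp (measurable_const.sub hg)
    · refine intOn_bdd ?_ (C := 1) (fun u => hGbd h hh _) hvolI2
      exact (Gf_meas hK0 hKc hKsupp hh).comp (measurable_const.sub hg)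
    · exact fun u => hmono (by linarith)
  have htb_meas : Measurable tb := htb_anti.measurable
  -- monoEst rewrite
  have hmono : ∀ x : ℝ, monoEst K l₀ r₀ ε ℓ h lo hi g x =
      lo + ∫ z in Set.Ioc lo hi, Gf K ℓ (x - tb z) := by
    intro x
    unfold monoEst
    rw [intervalIntegral.integral_of_le hlohi.le]
    congr 1
    refine setIntegral_congr_fun measurableSet_Ioc (fun z _ => ?_)
    rw [show -(binvEst K l₀ r₀ ε h g z) = -(tb z) by rw [htb],
      Kh_iic K ℓ (-(tb z)) (-x), show -(tb z) - (-x) = x - tb z by ring]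
  -- positions of b x
  have hbx : ∀ x ∈ Set.Icc l₀ r₀, lo < b x ∧ b x < hi := by
    intro x hx
    have hxI := hmemI₀ x hx
    rw [Set.mem_Icc] at hx
    exact ⟨hanti hxI hmemR (by linarith [hx.2]), hanti hmemL hxI (by linarith [hx.1])⟩
  have hbtm : Measurable bt := hbtc.measurable
  -- the joint integrand for the first swap
  set f1 : ℝ → ℝ → ℝ :=
    fun x z => |Gf K ℓ (x - tb z) - (Set.Iio (bt x)).indicator (fun _ => (1:ℝ)) z| with hf1
  have hf1m : Measurable (Function.uncurry f1) := by
    rw [hf1]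
    apply Measurable.abs
    apply Measurable.sub
    · exact (Gf_meas hK0 hKc hKsupp hℓ).comp (measurable_fst.sub (htb_meas.comp measurable_snd))
    · have he : (fun p : ℝ × ℝ => (Set.Iio (bt p.1)).indicator (fun _ => (1:ℝ)) p.2)
          = fun p : ℝ × ℝ => if p.2 < bt p.1 then (1:ℝ) else 0 := by
        funext p; simp [Set.indicator_apply]
      show Measurable fun p : ℝ × ℝ => (Set.Iio (bt p.1)).indicator (fun _ => (1:ℝ)) p.2
      rw [he]
      exact Measurable.ite (measurableSet_lt measurable_snd (hbtm.comp measurable_fst))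
        measurable_const measurable_const
  have hf1bd : ∀ x z, |f1 x z| ≤ 1 := fun x z => by
    rw [hf1, abs_abs]; exact Gf_abs_sub_ind_le_one hK0 hKc hKsupp hKint hℓ _ _ _
  have hind_int : ∀ x : ℝ,
      IntegrableOn (fun z => (Set.Iio (bt x)).indicator (fun _ => (1:ℝ)) z) (Set.Ioc lo hi) := by
    intro x
    refine intOn_bdd (measurable_const.indicator measurableSet_Iio) (C := 1) ?_ hvolIoc
    intro z; rcases ind_mem_01 (Set.Iio (bt x)) z with hz | hz <;> rw [hz] <;> norm_num
  have hGz_int : ∀ x : ℝ, IntegrableOn (fun z => Gf K ℓ (x - tb z)) (Set.Ioc lo hi) := by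
    intro x
    refine intOn_bdd ?_ (C := 1) (fun z => hGbd ℓ hℓ _) hvolIoc
    exact (Gf_meas hK0 hKc hKsupp hℓ).comp (measurable_const.sub htb_meas)
  -- indicator representation of b x
  have hbrep : ∀ x ∈ Set.Icc l₀ r₀,
      b x = lo + ∫ z in Set.Ioc lo hi, (Set.Iio (bt x)).indicator (fun _ => (1:ℝ)) z := by
    intro x hx
    have hxx := hbx x hx
    rw [hbt x (hmemI₀ x hx), setIntegral_indicator measurableSet_Iio]
    have hset : Set.Ioc lo hi ∩ Set.Iio (b x) = Set.Ioo lo (b x) := by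
      ext z
      simp only [Set.mem_inter_iff, Set.mem_Ioc, Set.mem_Iio, Set.mem_Ioo]
      constructor
      · rintro ⟨⟨h1, _⟩, h3⟩; exact ⟨h1, h3⟩
      · rintro ⟨h1, h3⟩; exact ⟨⟨h1, by linarith [hxx.2]⟩, h3⟩
    rw [hset, setIntegral_const, smul_eq_mul, mul_one, Real.volume_real_Ioo_of_le (by linarith [hxx.1])]
    ring
  -- pointwise error bound
  have herr : ∀ x ∈ Set.Icc l₀ r₀, |monoEst K l₀ r₀ ε ℓ h lo hi g x - b x| ≤
      ∫ z in Set.Ioc lo hi, f1 x z := by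
    intro x hx
    rw [hmono x]
    nth_rewrite 1 [hbrep x hx]
    have harith : lo + (∫ z in Set.Ioc lo hi, Gf K ℓ (x - tb z)) -
        (lo + ∫ z in Set.Ioc lo hi, (Set.Iio (bt x)).indicator (fun _ => (1:ℝ)) z) =
        (∫ z in Set.Ioc lo hi, Gf K ℓ (x - tb z)) -
          ∫ z in Set.Ioc lo hi, (Set.Iio (bt x)).indicator (fun _ => (1:ℝ)) z := by ring
    rw [harith, ← integral_sub (hGz_int x) (hind_int x)]
    have := norm_integral_le_integral_norm (μ := volume.restrict (Set.Ioc lo hi))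
      (f := fun z => Gf K ℓ (x - tb z) - (Set.Iio (bt x)).indicator (fun _ => (1:ℝ)) z)
    simpa [hf1, Real.norm_eq_abs] using this
  -- the inner-z integral as a function of x : measurable and bounded
  have hQ0m : StronglyMeasurable (fun x => ∫ z in Set.Ioc lo hi, f1 x z) := by
    exact (hf1m.stronglyMeasurable).integral_prod_right'
  have hQ0bd : ∀ x : ℝ, |∫ z in Set.Ioc lo hi, f1 x z| ≤ (volume (Set.Ioc lo hi)).toReal := by
    intro x
    have := norm_setIntegral_le_of_norm_le_const (μ := volume) hvolIoc
      (C := 1) (f := fun z => f1 x z) (fun z _ => by rw [Real.norm_eq_abs]; exact hf1bd x z)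
    rw [Real.norm_eq_abs, one_mul] at this
    exact this
  -- step 1 : bound the error integral by the double integral
  have step1 : (∫ x in Set.Icc l₀ r₀, |monoEst K l₀ r₀ ε ℓ h lo hi g x - b x|) ≤
      ∫ x in Set.Icc l₀ r₀, ∫ z in Set.Ioc lo hi, f1 x z := by
    refine integral_mono_of_nonneg (Filter.Eventually.of_forall (fun x => abs_nonneg _)) ?_ ?_
    · exact intOn_bdd hQ0m.measurable hQ0bd hvolI₀
    · exact (ae_restrict_iff' measurableSet_Icc).mpr (Filter.Eventually.of_forall herr)
  -- step 2 : swap the order of integration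
  have step2 : (∫ x in Set.Icc l₀ r₀, ∫ z in Set.Ioc lo hi, f1 x z) =
      ∫ z in Set.Ioc lo hi, ∫ x in Set.Icc l₀ r₀, f1 x z :=
    my_swap hvolI₀ hvolIoc hf1m hf1bd
  -- the second joint integrand
  set f2 : ℝ → ℝ → ℝ :=
    fun z u => |Gf K h (z - g u) - (Set.Iio (bt u)).indicator (fun _ => (1:ℝ)) z| with hf2
  have hf2m : Measurable (Function.uncurry f2) := by
    rw [hf2]
    apply Measurable.abs
    apply Measurable.sub
    · exact (Gf_meas hK0 hKc hKsupp hh).comp (measurable_fst.sub (hg.comp measurable_snd))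
    · have he : (fun p : ℝ × ℝ => (Set.Iio (bt p.2)).indicator (fun _ => (1:ℝ)) p.1)
          = fun p : ℝ × ℝ => if p.1 < bt p.2 then (1:ℝ) else 0 := by
        funext p; simp [Set.indicator_apply]
      show Measurable fun p : ℝ × ℝ => (Set.Iio (bt p.2)).indicator (fun _ => (1:ℝ)) p.1
      rw [he]
      exact Measurable.ite (measurableSet_lt measurable_fst (hbtm.comp measurable_snd))
        measurable_const measurable_const
  have hf2bd : ∀ z u, |f2 z u| ≤ 1 := fun z u => by
    rw [hf2, abs_abs]; exact Gf_abs_sub_ind_le_one hK0 hKc hKsupp hKint hh _ _ _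
  set q : ℝ → ℝ := fun z => ∫ u in I2, f2 z u with hq
  have hqm : StronglyMeasurable q := by
    rw [hq]; exact (hf2m.stronglyMeasurable).integral_prod_right'
  have hqbd : ∀ z : ℝ, |q z| ≤ (volume I2).toReal := by
    intro z
    have := norm_setIntegral_le_of_norm_le_const (μ := volume) hvolI2
      (C := 1) (f := fun u => f2 z u) (fun u _ => by rw [Real.norm_eq_abs]; exact hf2bd z u)
    rw [Real.norm_eq_abs, one_mul] at this
    exact this
  -- key bound on the inner x-integral
  have hQle : ∀ z ∈ Set.Ioc lo hi, (∫ x in Set.Icc l₀ r₀, f1 x z) ≤ q z + 2*ℓ := by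
    intro z hz
    obtain ⟨u0, hu0mem, hu0b⟩ := hsurj z (Set.Ioc_subset_Icc_self hz)
    have hu0I2 : u0 ∈ I2 := by
      rw [Set.mem_Icc] at hu0mem ⊢; constructor <;> linarith [hu0mem.1, hu0mem.2]
    have hiff : ∀ x ∈ I2, (z < bt x ↔ x < u0) := by
      intro x hxI
      rw [hbt x hxI, ← hu0b]
      constructor
      · intro hlt
        by_contra hcon
        push_neg at hcon
        rcases eq_or_lt_of_le hcon with he | hlt2
        · rw [← he] at hlt; exact lt_irrefl _ hlt
        · exact absurd (hanti hu0I2 hxI hlt2) (by linarith)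
      · intro hlt; exact hanti hxI hu0I2 hlt
    have hindeq : ∀ x ∈ Set.Icc l₀ r₀, (Set.Iio (bt x)).indicator (fun _ => (1:ℝ)) z =
        (Set.Iio u0).indicator (fun _ => (1:ℝ)) x := by
      intro x hx
      have hx2 := hmemI₀ x hx
      by_cases hc : z < bt x
      · rw [Set.indicator_of_mem (Set.mem_Iio.2 hc),
          Set.indicator_of_mem (Set.mem_Iio.2 ((hiff x hx2).1 hc))]
      · rw [Set.indicator_of_notMem (by rw [Set.mem_Iio]; exact hc),
          Set.indicator_of_notMem (by rw [Set.mem_Iio]; intro hcc; exact hc ((hiff x hx2).2 hcc))]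
    -- integrabilities in x
    have hia : IntegrableOn (fun x => |Gf K ℓ (x - tb z) - Gf K ℓ (x - u0)|)
        (Set.Icc l₀ r₀) := by
      refine intOn_bdd ?_ (C := 2) ?_ hvolI₀
      · apply Measurable.abs
        exact ((Gf_meas hK0 hKc hKsupp hℓ).comp (measurable_id.sub_const (tb z))).sub
          ((Gf_meas hK0 hKc hKsupp hℓ).comp (measurable_id.sub_const u0))
      · intro x
        rw [abs_abs]
        calc |Gf K ℓ (x - tb z) - Gf K ℓ (x - u0)| ≤ |Gf K ℓ (x - tb z)| + |Gf K ℓ (x - u0)| :=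
              abs_sub _ _
          _ ≤ 2 := by linarith [hGbd ℓ hℓ (x - tb z), hGbd ℓ hℓ (x - u0)]
    have hib : IntegrableOn (fun x => |Gf K ℓ (x - u0) - (Set.Iio u0).indicator (fun _ => (1:ℝ)) x|)
        (Set.Icc l₀ r₀) := by
      refine intOn_bdd ?_ (C := 1) ?_ hvolI₀
      · apply Measurable.abs
        exact ((Gf_meas hK0 hKc hKsupp hℓ).comp (measurable_id.sub_const u0)).sub
          (measurable_const.indicator measurableSet_Iio)
      · intro x
        rw [abs_abs]; exact Gf_abs_sub_ind_le_one hK0 hKc hKsupp hKint hℓ _ _ _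
    calc (∫ x in Set.Icc l₀ r₀, f1 x z)
        = ∫ x in Set.Icc l₀ r₀,
            |Gf K ℓ (x - tb z) - (Set.Iio u0).indicator (fun _ => (1:ℝ)) x| := by
          refine setIntegral_congr_fun measurableSet_Icc (fun x hx => ?_)
          rw [hf1]
          simp only
          rw [hindeq x hx]
      _ ≤ ∫ x in Set.Icc l₀ r₀, (|Gf K ℓ (x - tb z) - Gf K ℓ (x - u0)| +
            |Gf K ℓ (x - u0) - (Set.Iio u0).indicator (fun _ => (1:ℝ)) x|) := by
          refine setIntegral_mono ?_ (hia.add hib) (fun x => abs_sub_le _ _ _)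
          refine intOn_bdd ?_ (C := 1) (fun x => by
            rw [abs_abs]; exact Gf_abs_sub_ind_le_one hK0 hKc hKsupp hKint hℓ _ _ _) hvolI₀
          apply Measurable.abs
          exact ((Gf_meas hK0 hKc hKsupp hℓ).comp (measurable_id.sub_const (tb z))).sub
            (measurable_const.indicator measurableSet_Iio)
      _ = (∫ x in Set.Icc l₀ r₀, |Gf K ℓ (x - tb z) - Gf K ℓ (x - u0)|) +
          ∫ x in Set.Icc l₀ r₀, |Gf K ℓ (x - u0) - (Set.Iio u0).indicator (fun _ => (1:ℝ)) x| :=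
          integral_add hia hib
      _ ≤ |tb z - u0| + 2*ℓ := by
          have h1 : (∫ x in Set.Icc l₀ r₀, |Gf K ℓ (x - tb z) - Gf K ℓ (x - u0)|) ≤
              |tb z - u0| := by
            rw [integral_Icc_eq_integral_Ioc, ← intervalIntegral.integral_of_le hlr.le]
            exact Gf_tv hK0 hKc hKsupp hKint hℓ hlr.le (tb z) u0
          have h2 : (∫ x in Set.Icc l₀ r₀,
              |Gf K ℓ (x - u0) - (Set.Iio u0).indicator (fun _ => (1:ℝ)) x|) ≤ 2*ℓ := by
            rw [integral_Icc_eq_integral_Ioc, ← intervalIntegral.integral_of_le hlr.le]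
            exact Gf_indInt hK0 hKc hKsupp hKint hℓ hlr.le u0
          linarith
      _ ≤ q z + 2*ℓ := by
          have hrep : u0 = L2 + ∫ u in I2, (Set.Iio (bt u)).indicator (fun _ => (1:ℝ)) z := by
            have hSind : (fun u => (Set.Iio (bt u)).indicator (fun _ => (1:ℝ)) z) =
                fun u => ({v : ℝ | z < bt v}).indicator (fun _ => (1:ℝ)) u := by
              funext u; simp [Set.indicator_apply]
            rw [hSind, setIntegral_indicator (measurableSet_lt measurable_const hbtm)]
            have hset : I2 ∩ {v : ℝ | z < bt v} = Set.Ico L2 u0 := by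
              ext u
              simp only [Set.mem_inter_iff, Set.mem_Icc, Set.mem_setOf_eq, Set.mem_Ico, hI2]
              constructor
              · rintro ⟨⟨hu1, hu2⟩, hu3⟩
                exact ⟨hu1, (hiff u (by rw [hI2, Set.mem_Icc]; exact ⟨hu1, hu2⟩)).1 hu3⟩
              · rintro ⟨hu1, hu2⟩
                have huR : u ≤ R2 := by
                  rw [Set.mem_Icc] at hu0mem
                  have := hu0mem.2; rw [hR2]; linarith
                exact ⟨⟨hu1, huR⟩, (hiff u (by rw [hI2, Set.mem_Icc]; exact ⟨hu1, huR⟩)).2 hu2⟩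
            rw [hset, setIntegral_const, smul_eq_mul, mul_one, Real.volume_real_Ico_of_le ?_]
            · ring
            · rw [Set.mem_Icc] at hu0mem
              have := hu0mem.1; rw [hL2]; linarith
          have hIg : IntegrableOn (fun u => Gf K h (z - g u)) I2 := by
            refine intOn_bdd ?_ (C := 1) (fun u => hGbd h hh _) hvolI2
            exact (Gf_meas hK0 hKc hKsupp hh).comp (measurable_const.sub hg)
          have hIi : IntegrableOn (fun u => (Set.Iio (bt u)).indicator (fun _ => (1:ℝ)) z) I2 := by
            have hSind : (fun u => (Set.Iio (bt u)).indicator (fun _ => (1:ℝ)) z) =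
                fun u => ({v : ℝ | z < bt v}).indicator (fun _ => (1:ℝ)) u := by
              funext u; simp [Set.indicator_apply]
            rw [hSind]
            refine intOn_bdd (measurable_const.indicator (measurableSet_lt measurable_const hbtm))
              (C := 1) ?_ hvolI2
            intro u; rcases ind_mem_01 {v : ℝ | z < bt v} u with hz' | hz' <;> rw [hz'] <;> norm_num
          have hd : tb z - u0 = ∫ u in I2,
              (Gf K h (z - g u) - (Set.Iio (bt u)).indicator (fun _ => (1:ℝ)) z) := by
            rw [htbeq z, hrep, integral_sub hIg hIi]
            ring
          have habs : |tb z - u0| ≤ q z := by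
            rw [hd]
            have := norm_integral_le_integral_norm (μ := volume.restrict I2)
              (f := fun u => Gf K h (z - g u) - (Set.Iio (bt u)).indicator (fun _ => (1:ℝ)) z)
            rw [hq]
            simp only [hf2]
            simpa [Real.norm_eq_abs] using this
          linarith
  -- step 3 : integrate the bound in z
  have hq_int : IntegrableOn q (Set.Ioc lo hi) := intOn_bdd hqm.measurable hqbd hvolIoc
  have step3 : (∫ z in Set.Ioc lo hi, ∫ x in Set.Icc l₀ r₀, f1 x z) ≤
      ∫ z in Set.Ioc lo hi, (q z + 2*ℓ) := by
    refine integral_mono_of_nonneg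
      (Filter.Eventually.of_forall (fun z => setIntegral_nonneg measurableSet_Icc
        (fun x _ => by rw [hf1]; exact abs_nonneg _)))
      (hq_int.add (integrableOn_const hvolIoc.ne)) ?_
    exact (ae_restrict_iff' measurableSet_Ioc).mpr (Filter.Eventually.of_forall hQle)
  have step4 : (∫ z in Set.Ioc lo hi, (q z + 2*ℓ)) =
      (∫ z in Set.Ioc lo hi, q z) + 2*ℓ*(hi - lo) := by
    rw [integral_add hq_int (integrableOn_const hvolIoc.ne), setIntegral_const,
      smul_eq_mul, Real.volume_real_Ioc_of_le (by linarith)]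
    ring
  -- step 5 : swap z and u
  have step5 : (∫ z in Set.Ioc lo hi, q z) = ∫ u in I2, ∫ z in Set.Ioc lo hi, f2 z u := by
    rw [hq]; exact my_swap hvolIoc hvolI2 hf2m hf2bd
  -- step 6 : bound the inner z-integral
  have step6 : ∀ u ∈ I2, (∫ z in Set.Ioc lo hi, f2 z u) ≤ (5/2)*h + |g u - b u|^2/(2*h) := by
    intro u huI
    have hia : IntegrableOn (fun z => |Gf K h (z - g u) - Gf K h (z - bt u)|)
        (Set.Ioc lo hi) := by
      refine intOn_bdd ?_ (C := 2) ?_ hvolIoc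
      · apply Measurable.abs
        exact ((Gf_meas hK0 hKc hKsupp hh).comp (measurable_id.sub_const (g u))).sub
          ((Gf_meas hK0 hKc hKsupp hh).comp (measurable_id.sub_const (bt u)))
      · intro z
        rw [abs_abs]
        calc |Gf K h (z - g u) - Gf K h (z - bt u)| ≤ |Gf K h (z - g u)| + |Gf K h (z - bt u)| :=
              abs_sub _ _
          _ ≤ 2 := by linarith [hGbd h hh (z - g u), hGbd h hh (z - bt u)]
    have hib : IntegrableOn
        (fun z => |Gf K h (z - bt u) - (Set.Iio (bt u)).indicator (fun _ => (1:ℝ)) z|)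
        (Set.Ioc lo hi) := by
      refine intOn_bdd ?_ (C := 1) (fun z => by
        rw [abs_abs]; exact Gf_abs_sub_ind_le_one hK0 hKc hKsupp hKint hh _ _ _) hvolIoc
      apply Measurable.abs
      exact ((Gf_meas hK0 hKc hKsupp hh).comp (measurable_id.sub_const (bt u))).sub
        (measurable_const.indicator measurableSet_Iio)
    have htri : (∫ z in Set.Ioc lo hi, f2 z u) ≤ |g u - bt u| + 2*h := by
      calc (∫ z in Set.Ioc lo hi, f2 z u)
          ≤ ∫ z in Set.Ioc lo hi, (|Gf K h (z - g u) - Gf K h (z - bt u)| +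
              |Gf K h (z - bt u) - (Set.Iio (bt u)).indicator (fun _ => (1:ℝ)) z|) := by
            refine setIntegral_mono ?_ (hia.add hib) (fun z => by
              rw [hf2]; exact abs_sub_le _ _ _)
            refine intOn_bdd ?_ (C := 1) (fun z => by
              rw [abs_abs]; exact Gf_abs_sub_ind_le_one hK0 hKc hKsupp hKint hh _ _ _) hvolIoc
            apply Measurable.abs
            exact ((Gf_meas hK0 hKc hKsupp hh).comp (measurable_id.sub_const (g u))).sub
              (measurable_const.indicator measurableSet_Iio)
        _ = (∫ z in Set.Ioc lo hi, |Gf K h (z - g u) - Gf K h (z - bt u)|) +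
            ∫ z in Set.Ioc lo hi,
              |Gf K h (z - bt u) - (Set.Iio (bt u)).indicator (fun _ => (1:ℝ)) z| :=
            integral_add hia hib
        _ ≤ |g u - bt u| + 2*h := by
            have h1 : (∫ z in Set.Ioc lo hi, |Gf K h (z - g u) - Gf K h (z - bt u)|) ≤
                |g u - bt u| := by
              rw [← intervalIntegral.integral_of_le hlohi.le]
              exact Gf_tv hK0 hKc hKsupp hKint hh hlohi.le (g u) (bt u)
            have h2 : (∫ z in Set.Ioc lo hi,
                |Gf K h (z - bt u) - (Set.Iio (bt u)).indicator (fun _ => (1:ℝ)) z|) ≤ 2*h := by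
              rw [← intervalIntegral.integral_of_le hlohi.le]
              exact Gf_indInt hK0 hKc hKsupp hKint hh hlohi.le (bt u)
            linarith
    rw [hbt u huI] at htri
    have hamgm : |g u - b u| ≤ h/2 + |g u - b u|^2/(2*h) := by
      have hkey : (|g u - b u| - h/2) ≤ |g u - b u|^2/(2*h) := by
        rw [le_div_iff₀ (by linarith : (0:ℝ) < 2*h)]
        nlinarith [sq_nonneg (|g u - b u| - h), sq_abs (g u - b u)]
      linarith
    linarith
  -- step 7 : integrate in u
  have step7 : (∫ u in I2, ∫ z in Set.Ioc lo hi, f2 z u) ≤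
      ∫ u in I2, ((5/2)*h + |g u - b u|^2/(2*h)) := by
    refine integral_mono_of_nonneg
      (Filter.Eventually.of_forall (fun u => setIntegral_nonneg measurableSet_Ioc
        (fun z _ => by rw [hf2]; exact abs_nonneg _)))
      ((integrableOn_const hvolI2.ne).add (hd2.div_const (2*h))) ?_
    exact (ae_restrict_iff' measurableSet_Icc).mpr (Filter.Eventually.of_forall step6)
  have step8 : (∫ u in I2, ((5/2)*h + |g u - b u|^2/(2*h))) =
      (5/2)*h*(r₀ - l₀ + 4*ε) + (1/(2*h)) * ∫ u in I2, |g u - b u|^2 := by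
    rw [integral_add (integrableOn_const (C := (5/2)*h) hvolI2.ne) (hd2.div_const (2*h)),
      setIntegral_const, smul_eq_mul, hI2, Real.volume_real_Icc_of_le (by linarith), hL2, hR2]
    rw [integral_div]
    ring_nf
  calc (∫ x in Set.Icc l₀ r₀, |monoEst K l₀ r₀ ε ℓ h lo hi g x - b x|)
      ≤ ∫ x in Set.Icc l₀ r₀, ∫ z in Set.Ioc lo hi, f1 x z := step1
    _ = ∫ z in Set.Ioc lo hi, ∫ x in Set.Icc l₀ r₀, f1 x z := step2
    _ ≤ ∫ z in Set.Ioc lo hi, (q z + 2*ℓ) := step3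
    _ = (∫ z in Set.Ioc lo hi, q z) + 2*ℓ*(hi - lo) := step4
    _ = (∫ u in I2, ∫ z in Set.Ioc lo hi, f2 z u) + 2*ℓ*(hi - lo) := by rw [step5]
    _ ≤ ((5/2)*h*(r₀ - l₀ + 4*ε) + (1/(2*h)) * ∫ u in I2, |g u - b u|^2) + 2*ℓ*(hi - lo) := by
        have := le_trans step7 (le_of_eq step8)
        linarith
    _ = 2*ℓ*(b (l₀ - ε) - b (r₀ + ε)) + (5/2)*h*(r₀ - l₀ + 4*ε) +
        (1/(2*h)) * ∫ u in Set.Icc (l₀ - 2*ε) (r₀ + 2*ε), |g u - b u|^2 := by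
        rw [hhi, hlo, hI2, hL2, hR2]
        ring

set_option maxHeartbeats 2000000 in
/-- Theorem 2.2: `L¹`-risk bound for the strictly decreasing estimator `b̂_{ℓ,h}`. -/
theorem stmt1 (l₀ r₀ ε mb : ℝ) (K b b' binv : ℝ → ℝ)
    (hlr : l₀ < r₀) (hε : 0 < ε) (hε1 : ε ≤ 1) (hmb : 0 < mb)
    -- kernel assumptions
    (hK0 : ∀ y, 0 ≤ K y) (hK2 : ContDiff ℝ 2 K) (hKsymm : ∀ y, K (-y) = K y)
    (hKsupp : ∀ y, 1 < |y| → K y = 0) (hKint : ∫ y, K y = 1)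
    -- `b` is continuously differentiable on `I_{2ε}` with `b' ≤ -mb` there
    (hbd : ∀ x ∈ Set.Icc (l₀ - 2 * ε) (r₀ + 2 * ε), HasDerivAt b (b' x) x)
    (hb'c : ContinuousOn b' (Set.Icc (l₀ - 2 * ε) (r₀ + 2 * ε)))
    (hb'le : ∀ x ∈ Set.Icc (l₀ - 2 * ε) (r₀ + 2 * ε), b' x ≤ -mb)
    -- `binv` is the inverse of `b` on `I_{2ε}`
    (hbinv : ∀ x ∈ Set.Icc (l₀ - 2 * ε) (r₀ + 2 * ε), binv (b x) = x) :
    ∃ C > 0, ∀ (Ω : Type) [MeasurableSpace Ω] (P : Measure Ω) [IsProbabilityMeasure P]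
      (bhat : Ω → ℝ → ℝ), Measurable (Function.uncurry bhat) →
      (∀ x ∈ Set.Icc (l₀ - 2 * ε) (r₀ + 2 * ε),
        Integrable (fun ω => |bhat ω x - b x| ^ 2) P) →
      IntegrableOn (fun x => ∫ ω, |bhat ω x - b x| ^ 2 ∂P)
        (Set.Icc (l₀ - 2 * ε) (r₀ + 2 * ε)) →
      ∀ ℓ h : ℝ, 0 < ℓ → ℓ < min 1 mb * ε → 0 < h → h < min 1 mb * ε →
      (∫ x in Set.Icc l₀ r₀,
          ∫ ω, |monoEst K l₀ r₀ ε ℓ h (b (r₀ + ε)) (b (l₀ - ε)) (bhat ω) x - b x| ∂P) ≤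
        C * (ℓ + h +
          Real.sqrt (∫ x in Set.Icc (l₀ - 2 * ε) (r₀ + 2 * ε),
            ∫ ω, |bhat ω x - b x| ^ 2 ∂P) +
          (∫ x in Set.Icc (l₀ - 2 * ε) (r₀ + 2 * ε),
            ∫ ω, |bhat ω x - b x| ^ 2 ∂P) / h) := by
  have hKc : Continuous K := hK2.continuous
  have hbC : ContinuousOn b (Set.Icc (l₀ - 2*ε) (r₀ + 2*ε)) := by
    intro x hx
    have h1 : b = b := rfl
    have hx2 : x ∈ Set.Icc (l₀ - 2 * ε) (r₀ + 2 * ε) := by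
      rw [Set.mem_Icc] at hx ⊢; constructor <;> linarith [hx.1, hx.2]
    exact ((hbd x hx2).continuousAt).continuousWithinAt
  have hanti : StrictAntiOn b (Set.Icc (l₀ - 2*ε) (r₀ + 2*ε)) := by
    have : StrictAntiOn b (Set.Icc (l₀ - 2 * ε) (r₀ + 2 * ε)) := by
      refine strictAntiOn_of_deriv_neg (convex_Icc _ _) (by
        intro x hx; exact ((hbd x hx).continuousAt).continuousWithinAt) ?_
      intro x hx
      rw [interior_Icc] at hx
      have hx2 : x ∈ Set.Icc (l₀ - 2 * ε) (r₀ + 2 * ε) := Set.Ioo_subset_Icc_self hx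
      rw [(hbd x hx2).deriv]
      linarith [hb'le x hx2]
    intro x hx y hy hxy
    exact this (by rw [Set.mem_Icc] at hx ⊢; exact ⟨by linarith [hx.1], by linarith [hx.2]⟩)
      (by rw [Set.mem_Icc] at hy ⊢; exact ⟨by linarith [hy.1], by linarith [hy.2]⟩) hxy
  -- the clamped version of b
  set proj : ℝ → ℝ := fun x => max (l₀ - 2*ε) (min x (r₀ + 2*ε)) with hproj
  have hprojmem : ∀ x, proj x ∈ Set.Icc (l₀ - 2*ε) (r₀ + 2*ε) := by
    intro x
    rw [Set.mem_Icc]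
    constructor
    · exact le_max_left _ _
    · exact max_le (by linarith) (min_le_right _ _)
  have hprojc : Continuous proj := continuous_const.max (continuous_id.min continuous_const)
  set bt : ℝ → ℝ := fun x => b (proj x) with hbtdef
  have hbtc : Continuous bt := hbC.comp_continuous hprojc hprojmem
  have hbt : ∀ x ∈ Set.Icc (l₀ - 2*ε) (r₀ + 2*ε), bt x = b x := by
    intro x hx
    rw [Set.mem_Icc] at hx
    rw [hbtdef]
    simp only
    rw [hproj]
    simp only
    rw [min_eq_left hx.2, max_eq_right hx.1]
  have hmemL : l₀ - ε ∈ Set.Icc (l₀ - 2*ε) (r₀ + 2*ε) := by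
    rw [Set.mem_Icc]; constructor <;> linarith
  have hmemR : r₀ + ε ∈ Set.Icc (l₀ - 2*ε) (r₀ + 2*ε) := by
    rw [Set.mem_Icc]; constructor <;> linarith
  have hlohi : b (r₀ + ε) < b (l₀ - ε) := hanti hmemL hmemR (by linarith)
  -- the constant
  refine ⟨2*(b (l₀ - ε) - b (r₀ + ε)) + (5/2)*(r₀ - l₀ + 4*ε) + 1, by nlinarith, ?_⟩
  intro Ω _ P _ bhat hbm h2 h3 ℓ h hℓ hℓ' hh hh'
  set C : ℝ := 2*(b (l₀ - ε) - b (r₀ + ε)) + (5/2)*(r₀ - l₀ + 4*ε) + 1 with hC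
  clear_value C
  set I2 : Set ℝ := Set.Icc (l₀ - 2*ε) (r₀ + 2*ε) with hI2
  set I₀ : Set ℝ := Set.Icc l₀ r₀ with hI₀
  set R' : ℝ := ∫ x in I2, ∫ ω, |bhat ω x - b x| ^ 2 ∂P with hR'
  have hvolI2 : volume I2 < ⊤ := measure_Icc_lt_top
  have hvolI₀ : volume I₀ < ⊤ := measure_Icc_lt_top
  have hR'0 : 0 ≤ R' := by
    rw [hR']
    exact setIntegral_nonneg measurableSet_Icc
      (fun x _ => integral_nonneg (fun ω => by positivity))
  -- product integrability of the squared deviation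
  set F : ℝ × Ω → ℝ := fun p => |bhat p.2 p.1 - bt p.1| ^ 2 with hF
  have hFm : Measurable F := by
    rw [hF]
    apply Measurable.pow_const
    apply Measurable.abs
    exact (hbm.comp (measurable_snd.prodMk measurable_fst)).sub (hbtc.measurable.comp measurable_fst)
  have hFint : Integrable F ((volume.restrict I2).prod P) := by
    rw [integrable_prod_iff hFm.aestronglyMeasurable]
    constructor
    · refine (ae_restrict_iff' measurableSet_Icc).2 (Filter.Eventually.of_forall (fun x hx => ?_))
      have heq : (fun ω => F (x, ω)) = fun ω => |bhat ω x - b x| ^ 2 := by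
        funext ω; rw [hF]; simp only; rw [hbt x hx]
      rw [heq]
      exact h2 x hx
    · refine h3.congr ?_
      refine (ae_restrict_iff' measurableSet_Icc).2 (Filter.Eventually.of_forall (fun x hx => ?_))
      refine integral_congr_ae (Filter.Eventually.of_forall (fun ω => ?_))
      have hnn : 0 ≤ F (x, ω) := by rw [hF]; positivity
      show |bhat ω x - b x| ^ 2 = ‖F (x, ω)‖
      rw [Real.norm_of_nonneg hnn, hF]
      simp only
      rw [hbt x hx]
  have hFswap : Integrable (F ∘ Prod.swap) (P.prod (volume.restrict I2)) := hFint.swap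
  have hae : ∀ᵐ ω ∂P, IntegrableOn (fun u => |bhat ω u - b u| ^ 2) I2 := by
    filter_upwards [hFswap.prod_right_ae] with ω hω
    refine hω.congr ?_
    refine (ae_restrict_iff' measurableSet_Icc).2 (Filter.Eventually.of_forall (fun x hx => ?_))
    simp only [Function.comp, Prod.swap, hF]
    rw [hbt x hx]
  have hDint : Integrable (fun ω => ∫ x in I2, |bhat ω x - bt x| ^ 2) P := by
    have := hFswap.integral_prod_left
    exact this
  have hDeq : (∫ ω, (∫ x in I2, |bhat ω x - bt x| ^ 2) ∂P) = R' := by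
    have hsw := integral_integral_swap (f := fun (ω : Ω) (x : ℝ) => |bhat ω x - bt x| ^ 2)
      (μ := P) (ν := volume.restrict I2) (by exact hFswap)
    rw [hsw, hR']
    refine setIntegral_congr_fun measurableSet_Icc (fun x hx => ?_)
    refine integral_congr_ae (Filter.Eventually.of_forall (fun ω => ?_))
    rw [hbt x hx]
  -- joint measurability of the estimator
  set φ : Ω × ℝ → ℝ := fun p => binvEst K l₀ r₀ ε h (bhat p.1) p.2 with hφ
  have hφeq : ∀ p : Ω × ℝ, φ p = (l₀ - 2*ε) + ∫ u in I2, Gf K h (p.2 - bhat p.1 u) := by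
    intro p
    rw [hφ]
    simp only
    unfold binvEst
    congr 1
    refine setIntegral_congr_fun measurableSet_Icc (fun u _ => ?_)
    rw [Kh_iic K h (-(bhat p.1 u)) (-p.2), show -(bhat p.1 u) - (-p.2) = p.2 - bhat p.1 u by ring]
  have hφm : Measurable φ := by
    have : φ = fun p : Ω × ℝ => (l₀ - 2*ε) + ∫ u in I2, Gf K h (p.2 - bhat p.1 u) :=
      funext hφeq
    rw [this]
    apply Measurable.add measurable_const
    have hψ : Measurable (fun q : (Ω × ℝ) × ℝ => Gf K h (q.1.2 - bhat q.1.1 q.2)) := by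
      apply (Gf_meas hK0 hKc hKsupp hh).comp
      exact (measurable_snd.comp measurable_fst).sub
        (hbm.comp ((measurable_fst.comp measurable_fst).prodMk measurable_snd))
    exact (hψ.stronglyMeasurable.integral_prod_right').measurable
  set m : Ω × ℝ → ℝ := fun p => monoEst K l₀ r₀ ε ℓ h (b (r₀ + ε)) (b (l₀ - ε)) (bhat p.1) p.2
    with hm
  have hmeq : ∀ p : Ω × ℝ, m p = b (r₀ + ε) +
      ∫ z in Set.Ioc (b (r₀ + ε)) (b (l₀ - ε)), Gf K ℓ (p.2 - φ (p.1, z)) := by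
    intro p
    rw [hm]
    simp only
    unfold monoEst
    rw [intervalIntegral.integral_of_le hlohi.le]
    congr 1
    refine setIntegral_congr_fun measurableSet_Ioc (fun z _ => ?_)
    rw [show -(binvEst K l₀ r₀ ε h (bhat p.1) z) = -(φ (p.1, z)) by rw [hφ],
      Kh_iic K ℓ (-(φ (p.1, z))) (-p.2), show -(φ (p.1, z)) - (-p.2) = p.2 - φ (p.1, z) by ring]
  have hmm : Measurable m := by
    rw [funext hmeq]
    apply Measurable.add measurable_const
    have hψ : Measurable (fun q : (Ω × ℝ) × ℝ => Gf K ℓ (q.1.2 - φ (q.1.1, q.2))) := by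
      apply (Gf_meas hK0 hKc hKsupp hℓ).comp
      exact (measurable_snd.comp measurable_fst).sub
        (hφm.comp ((measurable_fst.comp measurable_fst).prodMk measurable_snd))
    exact (hψ.stronglyMeasurable.integral_prod_right').measurable
  -- the error function and its bound
  set e : ℝ → Ω → ℝ := fun x ω => |m (ω, x) - bt x| with he
  have hem : Measurable (Function.uncurry e) := by
    rw [he]
    apply Measurable.abs
    exact (hmm.comp (measurable_snd.prodMk measurable_fst)).sub
      (hbtc.measurable.comp measurable_fst)
  have hGbd : ∀ (η : ℝ), 0 < η → ∀ (s : ℝ), |Gf K η s| ≤ 1 := fun η hη s =>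
    abs_le.2 ⟨by linarith [Gf_nonneg hK0 hη s], Gf_le_one hK0 hKc hKsupp hKint hη s⟩
  have hmbound : ∀ p : Ω × ℝ, b (r₀ + ε) ≤ m p ∧ m p ≤ b (l₀ - ε) := by
    intro p
    rw [hmeq p]
    constructor
    · have : (0:ℝ) ≤ ∫ z in Set.Ioc (b (r₀ + ε)) (b (l₀ - ε)), Gf K ℓ (p.2 - φ (p.1, z)) :=
        setIntegral_nonneg measurableSet_Ioc (fun z _ => Gf_nonneg hK0 hℓ _)
      linarith
    · have hnorm := norm_setIntegral_le_of_norm_le_const (μ := volume)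
        (s := Set.Ioc (b (r₀ + ε)) (b (l₀ - ε)))
        (measure_Ioc_lt_top) (C := 1)
        (f := fun z => Gf K ℓ (p.2 - φ (p.1, z)))
        (fun z _ => by rw [Real.norm_eq_abs]; exact hGbd ℓ hℓ _)
      rw [Real.norm_eq_abs, one_mul, Real.volume_real_Ioc_of_le (by linarith)] at hnorm
      have := (abs_le.1 hnorm).2
      linarith
  have hbx : ∀ x ∈ I₀, b (r₀ + ε) ≤ b x ∧ b x ≤ b (l₀ - ε) := by
    intro x hx
    have hxI : x ∈ I2 := by
      rw [hI₀, Set.mem_Icc] at hx; rw [hI2, Set.mem_Icc]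
      constructor <;> linarith [hx.1, hx.2]
    rw [hI₀, Set.mem_Icc] at hx
    exact ⟨(hanti hxI hmemR (by linarith [hx.2])).le, (hanti hmemL hxI (by linarith [hx.1])).le⟩
  have hebd : ∀ x ∈ I₀, ∀ ω : Ω, |e x ω| ≤ b (l₀ - ε) - b (r₀ + ε) := by
    intro x hx ω
    have h1 := hmbound (ω, x)
    have h2' := hbx x hx
    have hxI : x ∈ I2 := by
      rw [hI₀, Set.mem_Icc] at hx; rw [hI2, Set.mem_Icc]
      constructor <;> linarith [hx.1, hx.2]
    rw [he]
    simp only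
    rw [abs_abs, hbt x hxI, abs_le]
    constructor <;> linarith [h1.1, h1.2, h2'.1, h2'.2]
  -- integrability of e on the product, and the swap
  haveI : IsFiniteMeasure (volume.restrict I₀) := finRestrict hvolI₀
  have haeprod : ∀ᵐ p : ℝ × Ω ∂((volume.restrict I₀).prod P), p.1 ∈ I₀ := by
    refine (MeasureTheory.ae_iff).2 ?_
    have hset : {p : ℝ × Ω | ¬ p.1 ∈ I₀} = (I₀ᶜ) ×ˢ (Set.univ : Set Ω) := by
      ext p; simp
    rw [hset, Measure.prod_prod, Measure.restrict_apply measurableSet_Icc.compl]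
    simp [hI₀]
  have heint : Integrable (Function.uncurry e) ((volume.restrict I₀).prod P) := by
    refine (integrable_const (b (l₀ - ε) - b (r₀ + ε))).mono' hem.aestronglyMeasurable ?_
    filter_upwards [haeprod] with p hp
    rw [Real.norm_eq_abs]
    exact hebd p.1 hp p.2
  have hswap : (∫ x in I₀, ∫ ω, e x ω ∂P) = ∫ ω, (∫ x in I₀, e x ω) ∂P :=
    integral_integral_swap heint
  -- identification of the LHS
  have hLHS : (∫ x in I₀,
      ∫ ω, |monoEst K l₀ r₀ ε ℓ h (b (r₀ + ε)) (b (l₀ - ε)) (bhat ω) x - b x| ∂P) =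
      ∫ x in I₀, ∫ ω, e x ω ∂P := by
    refine setIntegral_congr_fun measurableSet_Icc (fun x hx => ?_)
    have hxI : x ∈ I2 := by
      rw [hI₀, Set.mem_Icc] at hx; rw [hI2, Set.mem_Icc]
      constructor <;> linarith [hx.1, hx.2]
    refine integral_congr_ae (Filter.Eventually.of_forall (fun ω => ?_))
    rw [he]
    simp only
    rw [hm]
    simp only
    rw [hbt x hxI]
  -- apply the per-ω bound
  have hperω : ∀ᵐ ω ∂P, (∫ x in I₀, e x ω) ≤
      2*ℓ*(b (l₀ - ε) - b (r₀ + ε)) + (5/2)*h*(r₀ - l₀ + 4*ε) +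
        (1/(2*h)) * ∫ u in I2, |bhat ω u - bt u| ^ 2 := by
    filter_upwards [hae] with ω hω
    have hgm : Measurable (bhat ω) := hbm.of_uncurry_left
    have hper := perOmega l₀ r₀ ε K b bt hlr hε hK0 hKc hKsupp hKint hbtc hbt hanti hbC
      (bhat ω) hgm hω ℓ h hℓ hh
    have he1 : (∫ x in I₀, e x ω) =
        ∫ x in Set.Icc l₀ r₀, |monoEst K l₀ r₀ ε ℓ h (b (r₀ + ε)) (b (l₀ - ε)) (bhat ω) x - b x| := by
      refine setIntegral_congr_fun measurableSet_Icc (fun x hx => ?_)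
      have hxI : x ∈ I2 := by
        rw [hI₀, Set.mem_Icc] at hx; rw [hI2, Set.mem_Icc]
        constructor <;> linarith [hx.1, hx.2]
      rw [he]
      simp only
      rw [hm]
      simp only
      rw [hbt x hxI]
    have he2 : (∫ u in I2, |bhat ω u - bt u| ^ 2) =
        ∫ u in Set.Icc (l₀ - 2*ε) (r₀ + 2*ε), |bhat ω u - b u| ^ 2 := by
      refine setIntegral_congr_fun measurableSet_Icc (fun u hu => ?_)
      rw [hbt u hu]
    rw [he1, he2]
    exact hper
  have hRHSint : Integrable (fun ω : Ω =>
      2*ℓ*(b (l₀ - ε) - b (r₀ + ε)) + (5/2)*h*(r₀ - l₀ + 4*ε) +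
        (1/(2*h)) * ∫ u in I2, |bhat ω u - bt u| ^ 2) P := by
    exact (integrable_const _).add (hDint.const_mul _)
  have hfinal : (∫ ω, (∫ x in I₀, e x ω) ∂P) ≤
      2*ℓ*(b (l₀ - ε) - b (r₀ + ε)) + (5/2)*h*(r₀ - l₀ + 4*ε) + (1/(2*h)) * R' := by
    calc (∫ ω, (∫ x in I₀, e x ω) ∂P)
        ≤ ∫ ω, (2*ℓ*(b (l₀ - ε) - b (r₀ + ε)) + (5/2)*h*(r₀ - l₀ + 4*ε) +
            (1/(2*h)) * ∫ u in I2, |bhat ω u - bt u| ^ 2) ∂P := by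
          refine integral_mono_of_nonneg ?_ hRHSint hperω
          exact Filter.Eventually.of_forall (fun ω => setIntegral_nonneg measurableSet_Icc
            (fun x _ => by rw [he]; exact abs_nonneg _))
      _ = 2*ℓ*(b (l₀ - ε) - b (r₀ + ε)) + (5/2)*h*(r₀ - l₀ + 4*ε) + (1/(2*h)) * R' := by
          rw [integral_add (integrable_const _) (hDint.const_mul _), integral_const,
            MeasureTheory.integral_const_mul, hDeq]
          simp [measure_univ]
  -- conclude
  rw [hLHS, hswap]
  have hc1 : 0 < b (l₀ - ε) - b (r₀ + ε) := by linarith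
  have hsq : 0 ≤ Real.sqrt R' := Real.sqrt_nonneg _
  have hRh : 0 ≤ R' / h := div_nonneg hR'0 hh.le
  have he1 : (1/(2*h)) * R' = (1/2) * (R'/h) := by field_simp
  have hCb : C = 2*(b (l₀ - ε) - b (r₀ + ε)) + (5/2)*(r₀ - l₀ + 4*ε) + 1 := hC
  have t1 : 2*ℓ*(b (l₀ - ε) - b (r₀ + ε)) ≤ C * ℓ := by
    rw [show 2*ℓ*(b (l₀ - ε) - b (r₀ + ε)) = (2*(b (l₀ - ε) - b (r₀ + ε))) * ℓ by ring]
    refine mul_le_mul_of_nonneg_right ?_ hℓ.le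
    rw [hCb]; nlinarith
  have t2 : (5/2)*h*(r₀ - l₀ + 4*ε) ≤ C * h := by
    rw [show (5/2)*h*(r₀ - l₀ + 4*ε) = ((5/2)*(r₀ - l₀ + 4*ε)) * h by ring]
    refine mul_le_mul_of_nonneg_right ?_ hh.le
    rw [hCb]; nlinarith
  have t3 : (1/(2*h)) * R' ≤ C * (R'/h) := by
    rw [he1]
    refine mul_le_mul_of_nonneg_right ?_ hRh
    rw [hCb]; nlinarith
  have t4 : 0 ≤ C * Real.sqrt R' := by
    refine mul_nonneg ?_ hsq
    rw [hCb]; nlinarith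
  have hexp : C * (ℓ + h + Real.sqrt R' + R'/h) =
      C*ℓ + C*h + C*Real.sqrt R' + C*(R'/h) := by ring
  calc (∫ ω, (∫ x in I₀, e x ω) ∂P)
      ≤ 2*ℓ*(b (l₀ - ε) - b (r₀ + ε)) + (5/2)*h*(r₀ - l₀ + 4*ε) + (1/(2*h)) * R' := hfinal
    _ ≤ C*ℓ + C*h + C*Real.sqrt R' + C*(R'/h) := by linarith
    _ = C * (ℓ + h + Real.sqrt R' + R'/h) := hexp.symm
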